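/- arXiv:2510.02537 — 4 statements merged into one kernel-verified Lean document; each statement's English description precedes it below -/
import Mathlib

section
/- Let (Ω, 𝔄) be a measurable space, σ > 0, and let μ0, μ1 be finite measures on Ω. Define the curve γ(s) = (1−s)² μ0 + s² μ1 + 2(s − s²) √(μ0 μ1) for s ∈ [0,1]. Then γ(0) = μ0, γ(1) = μ1, and γ is a constant-speed geodesic for the Hellinger distance: He_σ(γ(s), γ(t)) = |s − t| · He_σ(μ0, μ1) for all s, t ∈ [0,1]. -/
open MeasureTheory ENNReal Real

variable {Ω : Type*} [MeasurableSpace Ω]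

/-- The Hellinger distance with scale parameter `σ`, computed with the
reference measure `λ = μ0 + μ1`. -/
noncomputable def hellinger (σ : ℝ) (μ0 μ1 : Measure Ω) : ℝ :=
  σ * Real.sqrt (∫ ω, (Real.sqrt ((μ0.rnDeriv (μ0 + μ1) ω).toReal)
      - Real.sqrt ((μ1.rnDeriv (μ0 + μ1) ω).toReal)) ^ 2 ∂(μ0 + μ1))

/-- The geometric mean `√(μ0 μ1)` of two measures. -/
noncomputable def geomMean (μ0 μ1 : Measure Ω) : Measure Ω :=
  (μ0 + μ1).withDensity
    (fun ω => (μ0.rnDeriv (μ0 + μ1) ω * μ1.rnDeriv (μ0 + μ1) ω) ^ (1/2 : ℝ))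

/-- The Hellinger geodesic `γ(s) = (1−s)² μ0 + s² μ1 + 2(s−s²) √(μ0 μ1)`. -/
noncomputable def helGeodesic (μ0 μ1 : Measure Ω) (s : ℝ) : Measure Ω :=
  ENNReal.ofReal ((1 - s) ^ 2) • μ0 + ENNReal.ofReal (s ^ 2) • μ1 +
    ENNReal.ofReal (2 * (s - s ^ 2)) • geomMean μ0 μ1

/-- Integral against `withDensity` of an a.e.-finite density. -/
lemma integral_withDensity_toReal {ν : Measure Ω} {w : Ω → ℝ≥0∞} (hw : Measurable w)
    (hw' : ∀ᵐ ω ∂ν, w ω ≠ ∞) (g : Ω → ℝ) :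
    ∫ ω, g ω ∂(ν.withDensity w) = ∫ ω, (w ω).toReal * g ω ∂ν := by
  have h : ν.withDensity w = ν.withDensity (fun ω => ((w ω).toNNReal : ℝ≥0∞)) :=
    withDensity_congr_ae (hw'.mono fun ω h => (ENNReal.coe_toNNReal h).symm)
  rw [h, integral_withDensity_eq_integral_smul hw.ennreal_toNNReal g]
  rfl

/-- Key computation: the Hellinger integral of two `withDensity` measures. -/
lemma hellinger_withDensity (σ : ℝ) {ν : Measure Ω} [IsFiniteMeasure ν] {p q : Ω → ℝ≥0∞}
    (hp : Measurable p) (hq : Measurable q)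
    (hpf : ∫⁻ ω, p ω ∂ν ≠ ∞) (hqf : ∫⁻ ω, q ω ∂ν ≠ ∞) :
    hellinger σ (ν.withDensity p) (ν.withDensity q)
      = σ * Real.sqrt (∫ ω,
          (Real.sqrt ((p ω).toReal) - Real.sqrt ((q ω).toReal)) ^ 2 ∂ν) := by
  set w : Ω → ℝ≥0∞ := fun ω => p ω + q ω with hwdef
  have hwm : Measurable w := hp.add hq
  have hwf : ∫⁻ ω, w ω ∂ν ≠ ∞ := by
    rw [hwdef]
    simp only [lintegral_add_left hp]
    exact ENNReal.add_ne_top.mpr ⟨hpf, hqf⟩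
  have hsum : ν.withDensity p + ν.withDensity q = ν.withDensity w :=
    (withDensity_add_left hp q).symm
  haveI : IsFiniteMeasure (ν.withDensity p) := isFiniteMeasure_withDensity hpf
  haveI : IsFiniteMeasure (ν.withDensity q) := isFiniteMeasure_withDensity hqf
  haveI : IsFiniteMeasure (ν.withDensity w) := isFiniteMeasure_withDensity hwf
  have hpac : ν.withDensity p ≪ ν.withDensity w :=
    (withDensity_mono (ae_of_all _ fun ω => le_self_add)).absolutelyContinuous
  have hqac : ν.withDensity q ≪ ν.withDensity w :=
    (withDensity_mono (ae_of_all _ fun ω => le_add_self)).absolutelyContinuous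
  have h1 : (fun ω => (ν.withDensity p).rnDeriv (ν.withDensity w) ω * w ω) =ᵐ[ν] p := by
    filter_upwards [Measure.rnDeriv_mul_rnDeriv hpac (κ := ν),
      Measure.rnDeriv_withDensity ν hwm, Measure.rnDeriv_withDensity ν hp] with ω ha hb hc
    calc (ν.withDensity p).rnDeriv (ν.withDensity w) ω * w ω
        = (ν.withDensity p).rnDeriv (ν.withDensity w) ω
            * (ν.withDensity w).rnDeriv ν ω := by rw [hb]
      _ = (ν.withDensity p).rnDeriv ν ω := ha
      _ = p ω := hc
  have h2 : (fun ω => (ν.withDensity q).rnDeriv (ν.withDensity w) ω * w ω) =ᵐ[ν] q := by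
    filter_upwards [Measure.rnDeriv_mul_rnDeriv hqac (κ := ν),
      Measure.rnDeriv_withDensity ν hwm, Measure.rnDeriv_withDensity ν hq] with ω ha hb hc
    calc (ν.withDensity q).rnDeriv (ν.withDensity w) ω * w ω
        = (ν.withDensity q).rnDeriv (ν.withDensity w) ω
            * (ν.withDensity w).rnDeriv ν ω := by rw [hb]
      _ = (ν.withDensity q).rnDeriv ν ω := ha
      _ = q ω := hc
  unfold hellinger
  rw [hsum]
  congr 2
  rw [integral_withDensity_toReal hwm ((ae_lt_top hwm hwf).mono fun ω h => h.ne) _]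
  refine integral_congr_ae ?_
  filter_upwards [h1, h2, ae_lt_top hp hpf, ae_lt_top hq hqf, ae_lt_top hwm hwf]
    with ω h1ω h2ω hpω hqω hwω
  by_cases hw0 : w ω = 0
  · have hp0 : p ω = 0 := by rw [← h1ω]; simp [hw0]
    have hq0 : q ω = 0 := by rw [← h2ω]; simp [hw0]
    simp [hw0, hp0, hq0]
  · have hwt : w ω ≠ ∞ := hwω.ne
    have ha : (ν.withDensity p).rnDeriv (ν.withDensity w) ω = p ω / w ω :=
      (ENNReal.eq_div_iff hw0 hwt).mpr (by rw [mul_comm]; exact h1ω)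
    have hb : (ν.withDensity q).rnDeriv (ν.withDensity w) ω = q ω / w ω :=
      (ENNReal.eq_div_iff hw0 hwt).mpr (by rw [mul_comm]; exact h2ω)
    rw [ha, hb, ENNReal.toReal_div, ENNReal.toReal_div,
      Real.sqrt_div ENNReal.toReal_nonneg, Real.sqrt_div ENNReal.toReal_nonneg]
    have hwpos : 0 < (w ω).toReal := ENNReal.toReal_pos hw0 hwt
    have hWpos : 0 < Real.sqrt (w ω).toReal := Real.sqrt_pos.mpr hwpos
    have hW2 : Real.sqrt (w ω).toReal ^ 2 = (w ω).toReal := Real.sq_sqrt hwpos.le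
    field_simp
    rw [hW2]

theorem helGeodesic_is_constant_speed_geodesic (σ : ℝ) (hσ : 0 < σ)
    (μ0 μ1 : Measure Ω) [IsFiniteMeasure μ0] [IsFiniteMeasure μ1] :
    helGeodesic μ0 μ1 0 = μ0 ∧ helGeodesic μ0 μ1 1 = μ1 ∧
      ∀ s ∈ Set.Icc (0:ℝ) 1, ∀ t ∈ Set.Icc (0:ℝ) 1,
        hellinger σ (helGeodesic μ0 μ1 s) (helGeodesic μ0 μ1 t) =
          |s - t| * hellinger σ μ0 μ1 := by
  set m : Measure Ω := μ0 + μ1 with hm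
  set f : Ω → ℝ≥0∞ := μ0.rnDeriv m with hf
  set g : Ω → ℝ≥0∞ := μ1.rnDeriv m with hg
  have hfm : Measurable f := Measure.measurable_rnDeriv μ0 m
  have hgm : Measurable g := Measure.measurable_rnDeriv μ1 m
  have hroot : Measurable (fun ω => (f ω * g ω) ^ (1/2 : ℝ)) :=
    (hfm.mul hgm).pow measurable_const
  have hff : ∫⁻ ω, f ω ∂m ≠ ∞ := (Measure.lintegral_rnDeriv_lt_top μ0 m).ne
  have hgf : ∫⁻ ω, g ω ∂m ≠ ∞ := (Measure.lintegral_rnDeriv_lt_top μ1 m).ne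
  have hrle : ∀ ω, (f ω * g ω) ^ (1/2 : ℝ) ≤ f ω + g ω := by
    intro ω
    have h1 : f ω * g ω ≤ (f ω + g ω) * (f ω + g ω) :=
      mul_le_mul' le_self_add le_add_self
    calc (f ω * g ω) ^ (1/2 : ℝ)
        ≤ ((f ω + g ω) * (f ω + g ω)) ^ (1/2 : ℝ) :=
          ENNReal.rpow_le_rpow h1 (by norm_num)
      _ = f ω + g ω := by
          rw [← pow_two, ← ENNReal.rpow_natCast _ 2, ← ENNReal.rpow_mul]
          norm_num
  have hrf : ∫⁻ ω, (f ω * g ω) ^ (1/2 : ℝ) ∂m ≠ ∞ := by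
    refine ne_top_of_le_ne_top ?_ (lintegral_mono hrle)
    rw [lintegral_add_left hfm]
    exact ENNReal.add_ne_top.mpr ⟨hff, hgf⟩
  have hμ0ac : μ0 ≪ m := (Measure.le_add_right le_rfl).absolutelyContinuous
  have hμ1ac : μ1 ≪ m := (Measure.le_add_left le_rfl).absolutelyContinuous
  have hμ0eq : m.withDensity f = μ0 := Measure.withDensity_rnDeriv_eq μ0 m hμ0ac
  have hμ1eq : m.withDensity g = μ1 := Measure.withDensity_rnDeriv_eq μ1 m hμ1ac
  -- density of the geodesic
  set H : ℝ → Ω → ℝ≥0∞ := fun s ω =>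
    ENNReal.ofReal ((1 - s) ^ 2) * f ω + ENNReal.ofReal (s ^ 2) * g ω +
      ENNReal.ofReal (2 * (s - s ^ 2)) * (f ω * g ω) ^ (1/2 : ℝ) with hH
  have hHm : ∀ s, Measurable (H s) := fun s =>
    ((measurable_const.mul hfm).add (measurable_const.mul hgm)).add
      (measurable_const.mul hroot)
  have hHf : ∀ s, ∫⁻ ω, H s ω ∂m ≠ ∞ := by
    intro s
    rw [hH]
    simp only
    rw [lintegral_add_left (show Measurable (fun ω => ENNReal.ofReal ((1 - s) ^ 2) * f ω
          + ENNReal.ofReal (s ^ 2) * g ω) from (hfm.const_mul _).add (hgm.const_mul _)),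
      lintegral_add_left (hfm.const_mul _),
      lintegral_const_mul _ hfm, lintegral_const_mul _ hgm, lintegral_const_mul _ hroot]
    refine ENNReal.add_ne_top.mpr ⟨ENNReal.add_ne_top.mpr ⟨?_, ?_⟩, ?_⟩
    · exact ENNReal.mul_ne_top ENNReal.ofReal_ne_top hff
    · exact ENNReal.mul_ne_top ENNReal.ofReal_ne_top hgf
    · exact ENNReal.mul_ne_top ENNReal.ofReal_ne_top hrf
  have hγ : ∀ s, helGeodesic μ0 μ1 s = m.withDensity (H s) := by
    intro s
    have e1 : m.withDensity (fun ω => ENNReal.ofReal ((1 - s) ^ 2) * f ω)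
        = ENNReal.ofReal ((1 - s) ^ 2) • μ0 := by
      rw [← hμ0eq, ← withDensity_smul _ hfm]; rfl
    have e2 : m.withDensity (fun ω => ENNReal.ofReal (s ^ 2) * g ω)
        = ENNReal.ofReal (s ^ 2) • μ1 := by
      rw [← hμ1eq, ← withDensity_smul _ hgm]; rfl
    have e3 : m.withDensity (fun ω => ENNReal.ofReal (2 * (s - s ^ 2)) * (f ω * g ω) ^ (1/2 : ℝ))
        = ENNReal.ofReal (2 * (s - s ^ 2)) • geomMean μ0 μ1 := by
      rw [show geomMean μ0 μ1 = m.withDensity (fun ω => (f ω * g ω) ^ (1/2 : ℝ)) from rfl,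
        ← withDensity_smul _ hroot]
      rfl
    have e0 : H s = ((fun ω => ENNReal.ofReal ((1 - s) ^ 2) * f ω)
          + (fun ω => ENNReal.ofReal (s ^ 2) * g ω))
        + (fun ω => ENNReal.ofReal (2 * (s - s ^ 2)) * (f ω * g ω) ^ (1/2 : ℝ)) := rfl
    rw [e0, withDensity_add_left (show Measurable ((fun ω => ENNReal.ofReal ((1 - s) ^ 2) * f ω)
        + fun ω => ENNReal.ofReal (s ^ 2) * g ω) from
        (measurable_const.mul hfm).add (measurable_const.mul hgm)),
      withDensity_add_left (hfm.const_mul _), e1, e2, e3, helGeodesic]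
  refine ⟨?_, ?_, ?_⟩
  · rw [hγ 0, hH]
    simp only
    norm_num
    exact hμ0eq
  · rw [hγ 1, hH]
    simp only
    norm_num
    exact hμ1eq
  · intro s hs t ht
    rw [hγ s, hγ t, hellinger_withDensity σ (hHm s) (hHm t) (hHf s) (hHf t)]
    have hsq : ∀ u ∈ Set.Icc (0:ℝ) 1, ∀ᵐ ω ∂m,
        Real.sqrt ((H u ω).toReal)
          = (1 - u) * Real.sqrt ((f ω).toReal) + u * Real.sqrt ((g ω).toReal) := by
      intro u hu
      filter_upwards [Measure.rnDeriv_lt_top μ0 m, Measure.rnDeriv_lt_top μ1 m] with ω hfω hgω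
      have h2u : 0 ≤ 2 * (u - u ^ 2) := by nlinarith [hu.1, hu.2]
      have htR : (H u ω).toReal
          = (1 - u) ^ 2 * (f ω).toReal + u ^ 2 * (g ω).toReal
            + 2 * (u - u ^ 2) * Real.sqrt ((f ω).toReal * (g ω).toReal) := by
        rw [hH]
        simp only
        rw [ENNReal.toReal_add, ENNReal.toReal_add, ENNReal.toReal_mul, ENNReal.toReal_mul,
          ENNReal.toReal_mul, ENNReal.toReal_ofReal (sq_nonneg _),
          ENNReal.toReal_ofReal (sq_nonneg _), ENNReal.toReal_ofReal h2u,
          ← ENNReal.toReal_rpow, ENNReal.toReal_mul, Real.sqrt_eq_rpow]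
        · exact ENNReal.mul_ne_top ENNReal.ofReal_ne_top hfω.ne
        · exact ENNReal.mul_ne_top ENNReal.ofReal_ne_top hgω.ne
        · exact ENNReal.add_ne_top.mpr ⟨ENNReal.mul_ne_top ENNReal.ofReal_ne_top hfω.ne,
            ENNReal.mul_ne_top ENNReal.ofReal_ne_top hgω.ne⟩
        · refine ENNReal.mul_ne_top ENNReal.ofReal_ne_top ?_
          exact (lt_of_le_of_lt (hrle ω) (ENNReal.add_lt_top.mpr ⟨hfω, hgω⟩)).ne
      set A := Real.sqrt ((f ω).toReal) with hA
      set B := Real.sqrt ((g ω).toReal) with hB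
      have hA0 : 0 ≤ A := Real.sqrt_nonneg _
      have hB0 : 0 ≤ B := Real.sqrt_nonneg _
      have hfA : (f ω).toReal = A ^ 2 := (Real.sq_sqrt ENNReal.toReal_nonneg).symm
      have hgB : (g ω).toReal = B ^ 2 := (Real.sq_sqrt ENNReal.toReal_nonneg).symm
      have hAB : Real.sqrt ((f ω).toReal * (g ω).toReal) = A * B := by
        rw [Real.sqrt_mul ENNReal.toReal_nonneg, hA, hB]
      have : (H u ω).toReal = ((1 - u) * A + u * B) ^ 2 := by
        rw [htR, hAB, hfA, hgB]; ring
      rw [this, Real.sqrt_sq (by nlinarith [hu.1, hu.2])]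
    have hint : ∫ ω, (Real.sqrt ((H s ω).toReal) - Real.sqrt ((H t ω).toReal)) ^ 2 ∂m
        = (s - t) ^ 2 * ∫ ω,
            (Real.sqrt ((μ0.rnDeriv m ω).toReal) - Real.sqrt ((μ1.rnDeriv m ω).toReal)) ^ 2 ∂m := by
      rw [← integral_const_mul]
      refine integral_congr_ae ?_
      filter_upwards [hsq s hs, hsq t ht] with ω h1 h2
      rw [h1, h2, ← hf, ← hg]
      ring
    rw [hint, Real.sqrt_mul (sq_nonneg _), Real.sqrt_sq_eq_abs]
    unfold hellinger
    rw [← hm, ← hf, ← hg]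
    ring
end

section
/- Let (Ω, 𝔄) be a measurable space, σ > 0, and let μ0, μ1, μ2 be finite measures on Ω. With the Hellinger midpoint A = (1/4) μ1 + (1/4) μ2 + (1/2) √(μ1 μ2), the parallelogram identity holds: 2 He_σ(μ0, μ1)² + 2 He_σ(μ0, μ2)² = He_σ(μ1, μ2)² + 4 He_σ(μ0, A)². -/
open MeasureTheory ENNReal Real

variable {Ω : Type*} [MeasurableSpace Ω]

lemma ennreal_sqrt_mul_self (x : ℝ≥0∞) : (x * x) ^ (1/2 : ℝ) = x := by
  rw [← sq, ← ENNReal.rpow_natCast x 2, ← ENNReal.rpow_mul]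
  norm_num

lemma ennreal_sqrt_mul_le (x y : ℝ≥0∞) : (x * y) ^ (1/2 : ℝ) ≤ x + y := by
  calc (x * y) ^ (1/2 : ℝ) ≤ ((x + y) * (x + y)) ^ (1/2 : ℝ) :=
        ENNReal.rpow_le_rpow (mul_le_mul' le_self_add le_add_self) (by norm_num)
  _ = x + y := ennreal_sqrt_mul_self _

instance geomMean_finite (μ ν : Measure Ω) [IsFiniteMeasure μ] [IsFiniteMeasure ν] :
    IsFiniteMeasure (geomMean μ ν) := by
  constructor
  rw [geomMean, withDensity_apply _ MeasurableSet.univ, Measure.restrict_univ]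
  calc ∫⁻ ω, (μ.rnDeriv (μ + ν) ω * ν.rnDeriv (μ + ν) ω) ^ (1/2 : ℝ) ∂(μ + ν)
      ≤ ∫⁻ ω, (μ.rnDeriv (μ + ν) ω + ν.rnDeriv (μ + ν) ω) ∂(μ + ν) :=
        lintegral_mono fun ω => ennreal_sqrt_mul_le _ _
    _ = ∫⁻ ω, μ.rnDeriv (μ + ν) ω ∂(μ + ν) + ∫⁻ ω, ν.rnDeriv (μ + ν) ω ∂(μ + ν) :=
        lintegral_add_left (Measure.measurable_rnDeriv _ _) _
    _ ≤ μ Set.univ + ν Set.univ :=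
        add_le_add Measure.lintegral_rnDeriv_le Measure.lintegral_rnDeriv_le
    _ < ⊤ := by
        exact ENNReal.add_lt_top.mpr ⟨measure_lt_top _ _, measure_lt_top _ _⟩

lemma integrable_sqrt_mul (μ ν lam : Measure Ω) [IsFiniteMeasure μ] [IsFiniteMeasure ν] :
    Integrable
      (fun ω => Real.sqrt ((μ.rnDeriv lam ω).toReal * (ν.rnDeriv lam ω).toReal)) lam := by
  have hμ := Measure.integrable_toReal_rnDeriv (μ := μ) (ν := lam)
  have hν := Measure.integrable_toReal_rnDeriv (μ := ν) (ν := lam)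
  refine ((hμ.add hν).div_const 2).mono' ?_ ?_
  · exact ((Measure.measurable_rnDeriv μ lam).ennreal_toReal.mul
      (Measure.measurable_rnDeriv ν lam).ennreal_toReal).sqrt.aestronglyMeasurable
  · refine Filter.Eventually.of_forall fun ω => ?_
    set x := (μ.rnDeriv lam ω).toReal with hxdef
    set y := (ν.rnDeriv lam ω).toReal with hydef
    have hx : 0 ≤ x := ENNReal.toReal_nonneg
    have hy : 0 ≤ y := ENNReal.toReal_nonneg
    rw [Real.norm_eq_abs, abs_of_nonneg (Real.sqrt_nonneg _)]
    have h : x * y ≤ ((x + y) / 2) ^ 2 := by nlinarith [sq_nonneg (x - y)]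
    calc Real.sqrt (x * y) ≤ Real.sqrt (((x + y) / 2) ^ 2) := Real.sqrt_le_sqrt h
    _ = (x + y) / 2 := Real.sqrt_sq (by positivity)

/-- Expansion of the Hellinger integrand. -/
lemma hellinger_integral_eq (μ ν lam : Measure Ω) [IsFiniteMeasure μ] [IsFiniteMeasure ν]
    [IsFiniteMeasure lam] (hμ : μ ≪ lam) (hν : ν ≪ lam) :
    ∫ ω, (Real.sqrt ((μ.rnDeriv lam ω).toReal) - Real.sqrt ((ν.rnDeriv lam ω).toReal)) ^ 2 ∂lam
      = (μ Set.univ).toReal + (ν Set.univ).toReal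
        - 2 * ∫ ω, Real.sqrt ((μ.rnDeriv lam ω).toReal * (ν.rnDeriv lam ω).toReal) ∂lam := by
  have h1 : ∀ ω,
      (Real.sqrt ((μ.rnDeriv lam ω).toReal) - Real.sqrt ((ν.rnDeriv lam ω).toReal)) ^ 2
      = (μ.rnDeriv lam ω).toReal + (ν.rnDeriv lam ω).toReal
        - 2 * Real.sqrt ((μ.rnDeriv lam ω).toReal * (ν.rnDeriv lam ω).toReal) := by
    intro ω
    rw [sub_sq, Real.sq_sqrt ENNReal.toReal_nonneg, Real.sq_sqrt ENNReal.toReal_nonneg,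
      Real.sqrt_mul ENNReal.toReal_nonneg]
    ring
  simp_rw [h1]
  have hμi := Measure.integrable_toReal_rnDeriv (μ := μ) (ν := lam)
  have hνi := Measure.integrable_toReal_rnDeriv (μ := ν) (ν := lam)
  have hsum : Integrable
      (fun ω => (μ.rnDeriv lam ω).toReal + (ν.rnDeriv lam ω).toReal) lam := hμi.add hνi
  rw [integral_sub hsum ((integrable_sqrt_mul μ ν lam).const_mul 2),
    integral_add hμi hνi, MeasureTheory.integral_const_mul,
    Measure.integral_toReal_rnDeriv hμ, Measure.integral_toReal_rnDeriv hν, measureReal_def,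
    measureReal_def]

/-- The Bhattacharyya integral does not depend on the reference measure. -/
lemma B_invariant (μ ν κ lam : Measure Ω) [IsFiniteMeasure μ] [IsFiniteMeasure ν]
    [IsFiniteMeasure κ] [IsFiniteMeasure lam]
    (hμκ : μ ≪ κ) (hνκ : ν ≪ κ) (hkl : κ ≪ lam) :
    ∫ ω, Real.sqrt ((μ.rnDeriv κ ω).toReal * (ν.rnDeriv κ ω).toReal) ∂κ
      = ∫ ω, Real.sqrt ((μ.rnDeriv lam ω).toReal * (ν.rnDeriv lam ω).toReal) ∂lam := by
  rw [← MeasureTheory.integral_rnDeriv_smul hkl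
    (f := fun ω => Real.sqrt ((μ.rnDeriv κ ω).toReal * (ν.rnDeriv κ ω).toReal))]
  refine integral_congr_ae ?_
  filter_upwards [Measure.rnDeriv_mul_rnDeriv hμκ (κ := lam),
    Measure.rnDeriv_mul_rnDeriv hνκ (κ := lam)] with ω h1 h2
  simp only [Pi.mul_apply] at h1 h2
  rw [smul_eq_mul, ← h1, ← h2, ENNReal.toReal_mul, ENNReal.toReal_mul]
  set a := (μ.rnDeriv κ ω).toReal
  set b := (ν.rnDeriv κ ω).toReal
  set g := (κ.rnDeriv lam ω).toReal with hg
  have hg0 : 0 ≤ g := ENNReal.toReal_nonneg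
  have : a * g * (b * g) = (a * b) * (g * g) := by ring
  rw [this, Real.sqrt_mul (mul_nonneg ENNReal.toReal_nonneg ENNReal.toReal_nonneg),
    Real.sqrt_mul_self hg0]
  ring


lemma isFiniteMeasure_smul (c : ℝ≥0∞) (hc : c ≠ ⊤) (μ : Measure Ω) [IsFiniteMeasure μ] :
    IsFiniteMeasure (c • μ) := by
  constructor
  rw [Measure.smul_apply, smul_eq_mul]
  exact ENNReal.mul_lt_top hc.lt_top (measure_lt_top μ _)

lemma rnDeriv_geomMean (μ1 μ2 lam : Measure Ω) [IsFiniteMeasure μ1] [IsFiniteMeasure μ2]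
    [IsFiniteMeasure lam] (h1 : μ1 ≪ lam) (h2 : μ2 ≪ lam) :
    (geomMean μ1 μ2).rnDeriv lam
      =ᵐ[lam] fun ω => (μ1.rnDeriv lam ω * μ2.rnDeriv lam ω) ^ (1/2 : ℝ) := by
  have h1k : μ1 ≪ μ1 + μ2 := Measure.absolutelyContinuous_of_le (Measure.le_add_right le_rfl)
  have h2k : μ2 ≪ μ1 + μ2 := Measure.absolutelyContinuous_of_le (Measure.le_add_left le_rfl)
  have hmeas : Measurable
      (fun ω => (μ1.rnDeriv (μ1 + μ2) ω * μ2.rnDeriv (μ1 + μ2) ω) ^ (1/2 : ℝ)) :=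
    ((Measure.measurable_rnDeriv _ _).mul (Measure.measurable_rnDeriv _ _)).pow_const _
  have hne : ∀ᵐ ω ∂(μ1 + μ2),
      (μ1.rnDeriv (μ1 + μ2) ω * μ2.rnDeriv (μ1 + μ2) ω) ^ (1/2 : ℝ) ≠ ∞ := by
    filter_upwards [Measure.rnDeriv_lt_top μ1 (μ1 + μ2), Measure.rnDeriv_lt_top μ2 (μ1 + μ2)]
      with ω hx hy
    exact ENNReal.rpow_ne_top_of_nonneg (by norm_num) (ENNReal.mul_ne_top hx.ne hy.ne)
  have h := Measure.rnDeriv_withDensity_left (μ := μ1 + μ2) (ν := lam)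
    hmeas.aemeasurable hne
  rw [geomMean]
  refine h.trans ?_
  filter_upwards [Measure.rnDeriv_mul_rnDeriv h1k (κ := lam),
    Measure.rnDeriv_mul_rnDeriv h2k (κ := lam)] with ω e1 e2
  simp only [Pi.mul_apply] at e1 e2
  rw [← e1, ← e2]
  set a := μ1.rnDeriv (μ1 + μ2) ω
  set b := μ2.rnDeriv (μ1 + μ2) ω
  set g := (μ1 + μ2).rnDeriv lam ω
  have hh : (0:ℝ) ≤ 1/2 := by norm_num
  rw [ENNReal.mul_rpow_of_nonneg (a * g) (b * g) hh, ENNReal.mul_rpow_of_nonneg a g hh,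
    ENNReal.mul_rpow_of_nonneg b g hh, ENNReal.mul_rpow_of_nonneg a b hh, mul_mul_mul_comm,
    ← ENNReal.mul_rpow_of_nonneg g g hh, ennreal_sqrt_mul_self]

/-- The density of the Hellinger midpoint is the square of the mean of the square roots. -/
lemma rnDeriv_mean (μ1 μ2 lam : Measure Ω) [IsFiniteMeasure μ1] [IsFiniteMeasure μ2]
    [IsFiniteMeasure lam] (h1 : μ1 ≪ lam) (h2 : μ2 ≪ lam) :
    ∀ᵐ ω ∂lam,
      ((((1/4 : ℝ≥0∞) • μ1 + (1/4 : ℝ≥0∞) • μ2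
          + (1/2 : ℝ≥0∞) • geomMean μ1 μ2).rnDeriv lam) ω).toReal
      = ((Real.sqrt ((μ1.rnDeriv lam ω).toReal)
          + Real.sqrt ((μ2.rnDeriv lam ω).toReal)) / 2) ^ 2 := by
  haveI := isFiniteMeasure_smul (1/4 : ℝ≥0∞) (by norm_num) μ1
  haveI := isFiniteMeasure_smul (1/4 : ℝ≥0∞) (by norm_num) μ2
  haveI  := isFiniteMeasure_smul (1/2 : ℝ≥0∞) (by norm_num) (geomMean μ1 μ2)
  have hadd1 := Measure.rnDeriv_add ((1/4 : ℝ≥0∞) • μ1 + (1/4 : ℝ≥0∞) • μ2)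
    ((1/2 : ℝ≥0∞) • geomMean μ1 μ2) lam
  have hadd2 := Measure.rnDeriv_add ((1/4 : ℝ≥0∞) • μ1) ((1/4 : ℝ≥0∞) • μ2) lam
  have hs1 := Measure.rnDeriv_smul_left_of_ne_top μ1 lam (r := (1/4 : ℝ≥0∞)) (by norm_num)
  have hs2 := Measure.rnDeriv_smul_left_of_ne_top μ2 lam (r := (1/4 : ℝ≥0∞)) (by norm_num)
  have hs3 := Measure.rnDeriv_smul_left_of_ne_top (geomMean μ1 μ2) lam
    (r := (1/2 : ℝ≥0∞)) (by norm_num)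
  have hgm := rnDeriv_geomMean μ1 μ2 lam h1 h2
  filter_upwards [hadd1, hadd2, hs1, hs2, hs3, hgm, Measure.rnDeriv_lt_top μ1 lam,
    Measure.rnDeriv_lt_top μ2 lam] with ω e1 e2 e3 e4 e5 e6 hx hy
  rw [e1, Pi.add_apply, e2, Pi.add_apply, e3, e4, e5, Pi.smul_apply, Pi.smul_apply,
    Pi.smul_apply, e6, smul_eq_mul, smul_eq_mul, smul_eq_mul]
  set a := μ1.rnDeriv lam ω
  set b := μ2.rnDeriv lam ω
  have hab : (a * b) ^ (1/2 : ℝ) ≠ ⊤ :=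
    ENNReal.rpow_ne_top_of_nonneg (by norm_num) (ENNReal.mul_ne_top hx.ne hy.ne)
  rw [ENNReal.toReal_add, ENNReal.toReal_add, ENNReal.toReal_mul, ENNReal.toReal_mul,
    ENNReal.toReal_mul]
  · have h14 : ((1/4 : ℝ≥0∞)).toReal = 1/4 := by norm_num
    have h12 : ((1/2 : ℝ≥0∞)).toReal = 1/2 := by norm_num
    rw [h14, h12, ← ENNReal.toReal_rpow, ENNReal.toReal_mul, ← Real.sqrt_eq_rpow,
      Real.sqrt_mul ENNReal.toReal_nonneg, div_pow, add_sq,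
      Real.sq_sqrt ENNReal.toReal_nonneg, Real.sq_sqrt ENNReal.toReal_nonneg]
    ring
  · exact ENNReal.mul_ne_top (by norm_num) hx.ne
  · exact ENNReal.mul_ne_top (by norm_num) hy.ne
  · exact (ENNReal.add_lt_top.mpr ⟨ENNReal.mul_lt_top (by norm_num) hx,
      ENNReal.mul_lt_top (by norm_num) hy⟩).ne
  · exact ENNReal.mul_ne_top (by norm_num) hab

theorem hellinger_parallelogram (σ : ℝ) (hσ : 0 < σ)
    (μ0 μ1 μ2 : Measure Ω) [IsFiniteMeasure μ0] [IsFiniteMeasure μ1] [IsFiniteMeasure μ2] :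
    2 * hellinger σ μ0 μ1 ^ 2 + 2 * hellinger σ μ0 μ2 ^ 2 =
      hellinger σ μ1 μ2 ^ 2 +
        4 * hellinger σ μ0
          ((1/4 : ℝ≥0∞) • μ1 + (1/4 : ℝ≥0∞) • μ2 + (1/2 : ℝ≥0∞) • geomMean μ1 μ2) ^ 2 := by
  have hgmfin : IsFiniteMeasure (geomMean μ1 μ2) := inferInstance
  set gm := geomMean μ1 μ2 with hgmdef
  set A := (1/4 : ℝ≥0∞) • μ1 + (1/4 : ℝ≥0∞) • μ2 + (1/2 : ℝ≥0∞) • gm with hAdef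
  haveI : IsFiniteMeasure A := by
    haveI := isFiniteMeasure_smul (1/4 : ℝ≥0∞) (by norm_num) μ1
    haveI := isFiniteMeasure_smul (1/4 : ℝ≥0∞) (by norm_num) μ2
    haveI := isFiniteMeasure_smul (1/2 : ℝ≥0∞) (by norm_num) gm
    infer_instance
  set lam := μ0 + μ1 + μ2 with hlamdef
  have h0 : μ0 ≪ lam := Measure.absolutelyContinuous_of_le
    (le_trans (Measure.le_add_right le_rfl) (Measure.le_add_right le_rfl))
  have h1 : μ1 ≪ lam := Measure.absolutelyContinuous_of_le
    (le_trans (Measure.le_add_left le_rfl) (Measure.le_add_right le_rfl))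
  have h2 : μ2 ≪ lam := Measure.absolutelyContinuous_of_le (Measure.le_add_left le_rfl)
  have hgml : gm ≪ lam := by
    rw [hgmdef, geomMean]
    exact (withDensity_absolutelyContinuous _ _).trans (h1.add_left h2)
  have hAl : A ≪ lam := by
    rw [hAdef]
    exact ((h1.smul_left _).add_left (h2.smul_left _)).add_left (hgml.smul_left _)
  -- general formula for squared Hellinger distance via the common reference measure lam
  have key : ∀ (μ ν : Measure Ω) [IsFiniteMeasure μ] [IsFiniteMeasure ν], μ ≪ lam → ν ≪ lam →
      hellinger σ μ ν ^ 2 = σ ^ 2 * ((μ Set.univ).toReal + (ν Set.univ).toReal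
        - 2 * ∫ ω, Real.sqrt ((μ.rnDeriv lam ω).toReal * (ν.rnDeriv lam ω).toReal) ∂lam) := by
    intro μ ν _ _ hμ hν
    have hμk : μ ≪ μ + ν := Measure.absolutelyContinuous_of_le (Measure.le_add_right le_rfl)
    have hνk : ν ≪ μ + ν := Measure.absolutelyContinuous_of_le (Measure.le_add_left le_rfl)
    rw [hellinger, mul_pow, Real.sq_sqrt (integral_nonneg fun ω => sq_nonneg _)]
    congr 1
    rw [hellinger_integral_eq μ ν (μ + ν) hμk hνk,
      B_invariant μ ν (μ + ν) lam hμk hνk (hμ.add_left hν)]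
  have e01 := key μ0 μ1 h0 h1
  have e02 := key μ0 μ2 h0 h2
  have e12 := key μ1 μ2 h1 h2
  have e0A := key μ0 A h0 hAl
  -- the Bhattacharyya integral of μ0 against A
  have hBA : ∫ ω, Real.sqrt ((μ0.rnDeriv lam ω).toReal * (A.rnDeriv lam ω).toReal) ∂lam
      = ((∫ ω, Real.sqrt ((μ0.rnDeriv lam ω).toReal * (μ1.rnDeriv lam ω).toReal) ∂lam)
        + ∫ ω, Real.sqrt ((μ0.rnDeriv lam ω).toReal * (μ2.rnDeriv lam ω).toReal) ∂lam) / 2 := by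
    have hae : ∀ᵐ ω ∂lam,
        Real.sqrt ((μ0.rnDeriv lam ω).toReal * (A.rnDeriv lam ω).toReal)
        = (Real.sqrt ((μ0.rnDeriv lam ω).toReal * (μ1.rnDeriv lam ω).toReal)
          + Real.sqrt ((μ0.rnDeriv lam ω).toReal * (μ2.rnDeriv lam ω).toReal)) / 2 := by
      filter_upwards [rnDeriv_mean μ1 μ2 lam h1 h2] with ω hω
      rw [Real.sqrt_mul ENNReal.toReal_nonneg, Real.sqrt_mul ENNReal.toReal_nonneg,
        Real.sqrt_mul ENNReal.toReal_nonneg, hω, Real.sqrt_sq (by positivity)]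
      ring
    rw [integral_congr_ae hae, integral_div,
      integral_add (integrable_sqrt_mul μ0 μ1 lam) (integrable_sqrt_mul μ0 μ2 lam)]
  -- the total mass of A
  have hmA : (A Set.univ).toReal
      = (1/4) * (μ1 Set.univ).toReal + (1/4) * (μ2 Set.univ).toReal
        + (1/2) * ∫ ω, Real.sqrt ((μ1.rnDeriv lam ω).toReal * (μ2.rnDeriv lam ω).toReal) ∂lam := by
    rw [← measureReal_def A Set.univ, ← Measure.integral_toReal_rnDeriv hAl]
    have hae : ∀ᵐ ω ∂lam, (A.rnDeriv lam ω).toReal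
        = (1/4) * (μ1.rnDeriv lam ω).toReal + (1/4) * (μ2.rnDeriv lam ω).toReal
          + (1/2) * Real.sqrt ((μ1.rnDeriv lam ω).toReal * (μ2.rnDeriv lam ω).toReal) := by
      filter_upwards [rnDeriv_mean μ1 μ2 lam h1 h2] with ω hω
      rw [hω, Real.sqrt_mul ENNReal.toReal_nonneg, div_pow, add_sq,
        Real.sq_sqrt ENNReal.toReal_nonneg, Real.sq_sqrt ENNReal.toReal_nonneg]
      ring
    rw [integral_congr_ae hae]
    have i1 := Measure.integrable_toReal_rnDeriv (μ := μ1) (ν := lam)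
    have i2 := Measure.integrable_toReal_rnDeriv (μ := μ2) (ν := lam)
    have i3 := integrable_sqrt_mul μ1 μ2 lam
    have isum : Integrable (fun ω => 1/4 * (μ1.rnDeriv lam ω).toReal
        + 1/4 * (μ2.rnDeriv lam ω).toReal) lam := (i1.const_mul _).add (i2.const_mul _)
    rw [integral_add isum (i3.const_mul _),
      integral_add (i1.const_mul _) (i2.const_mul _), MeasureTheory.integral_const_mul,
      MeasureTheory.integral_const_mul, MeasureTheory.integral_const_mul,
      Measure.integral_toReal_rnDeriv h1, Measure.integral_toReal_rnDeriv h2, measureReal_def,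
      measureReal_def]
  rw [e01, e02, e12, e0A, hBA, hmA]
  ring
end

section
/- Let (Ω1, 𝔄1) and (Ω2, 𝔄2) be measurable spaces and let ν1, η1 be finite measures on Ω1 and ν2, η2 be finite measures on Ω2. Then the geometric mean of the product measures equals the product of the geometric means: √((ν1 ⊗ ν2)(η1 ⊗ η2)) = √(ν1 η1) ⊗ √(ν2 η2). -/
open MeasureTheory ENNReal Real

variable {Ω : Type*} [MeasurableSpace Ω]

lemma ennreal_mul_self_rpow_half (c : ℝ≥0∞) : (c * c) ^ (1/2 : ℝ) = c := by
  rw [← pow_two, ← ENNReal.rpow_natCast, ← ENNReal.rpow_mul]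
  norm_num

lemma withDensity_prod_aux {α β : Type*} [MeasurableSpace α] [MeasurableSpace β]
    (μ : Measure α) (ν : Measure β) [SigmaFinite μ] [SigmaFinite ν]
    {f : α → ℝ≥0∞} {g : β → ℝ≥0∞} (hf : Measurable f) (hg : Measurable g)
    [SigmaFinite (μ.withDensity f)] [SigmaFinite (ν.withDensity g)] :
    (μ.withDensity f).prod (ν.withDensity g)
      = (μ.prod ν).withDensity (fun p => f p.1 * g p.2) := by
  refine Measure.prod_eq fun s t hs ht => ?_
  rw [withDensity_apply _ (hs.prod ht), ← Measure.prod_restrict,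
    MeasureTheory.lintegral_prod_mul hf.aemeasurable hg.aemeasurable,
    withDensity_apply _ hs, withDensity_apply _ ht]

lemma geomMean_le (μ0 μ1 : Measure Ω) [IsFiniteMeasure μ0] [IsFiniteMeasure μ1] :
    geomMean μ0 μ1 ≤ μ0 + μ1 := by
  have h0 : μ0 ≪ μ0 + μ1 := by
    exact Measure.absolutelyContinuous_of_le (Measure.le_add_right le_rfl)
  have h1 : μ1 ≪ μ0 + μ1 := by
    exact Measure.absolutelyContinuous_of_le (Measure.le_add_left le_rfl)
  calc geomMean μ0 μ1
      ≤ (μ0 + μ1).withDensity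
          (μ0.rnDeriv (μ0 + μ1) + μ1.rnDeriv (μ0 + μ1)) := by
        refine withDensity_mono (ae_of_all _ fun ω => ?_)
        simp only [Pi.add_apply]
        set a := μ0.rnDeriv (μ0 + μ1) ω
        set b := μ1.rnDeriv (μ0 + μ1) ω
        calc (a * b) ^ (1/2 : ℝ) ≤ ((a + b) * (a + b)) ^ (1/2 : ℝ) := by
              gcongr
              · exact le_add_right le_rfl
              · exact le_add_left le_rfl
          _ = a + b := ennreal_mul_self_rpow_half _
    _ = μ0 + μ1 := by
        rw [withDensity_add_right _ (Measure.measurable_rnDeriv _ _),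
          Measure.withDensity_rnDeriv_eq _ _ h0, Measure.withDensity_rnDeriv_eq _ _ h1]

instance geomMean_isFiniteMeasure (μ0 μ1 : Measure Ω) [IsFiniteMeasure μ0]
    [IsFiniteMeasure μ1] : IsFiniteMeasure (geomMean μ0 μ1) :=
  ⟨lt_of_le_of_lt (geomMean_le μ0 μ1 Set.univ) (measure_lt_top _ _)⟩

/-- Reference measure independence. -/
lemma geomMean_eq_withDensity (μ0 μ1 : Measure Ω) [IsFiniteMeasure μ0] [IsFiniteMeasure μ1]
    (lam : Measure Ω) [SigmaFinite lam] (h0 : μ0 ≪ lam) (h1 : μ1 ≪ lam) :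
    geomMean μ0 μ1
      = lam.withDensity (fun ω => (μ0.rnDeriv lam ω * μ1.rnDeriv lam ω) ^ (1/2 : ℝ)) := by
  set ρ := μ0 + μ1 with hρdef
  have hρ : ρ ≪ lam := by
    intro s hs
    rw [hρdef, Measure.add_apply, h0 hs, h1 hs, add_zero]
  have h0ρ : μ0 ≪ ρ := Measure.absolutelyContinuous_of_le (Measure.le_add_right le_rfl)
  have h1ρ : μ1 ≪ ρ := Measure.absolutelyContinuous_of_le (Measure.le_add_left le_rfl)
  have e0 := Measure.rnDeriv_mul_rnDeriv (ν := ρ) (κ := lam) h0ρ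
  have e1 := Measure.rnDeriv_mul_rnDeriv (ν := ρ) (κ := lam) h1ρ
  have hcong : (fun ω => (μ0.rnDeriv lam ω * μ1.rnDeriv lam ω) ^ (1/2 : ℝ))
      =ᵐ[lam] (ρ.rnDeriv lam * fun ω =>
        (μ0.rnDeriv ρ ω * μ1.rnDeriv ρ ω) ^ (1/2 : ℝ)) := by
    filter_upwards [e0, e1] with ω h0ω h1ω
    rw [← h0ω, ← h1ω]
    simp only [Pi.mul_apply]
    rw [mul_mul_mul_comm, ENNReal.mul_rpow_of_nonneg _ _ (by norm_num : (0:ℝ) ≤ 1/2),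
      ennreal_mul_self_rpow_half, mul_comm]
  rw [withDensity_congr_ae hcong,
    withDensity_mul _ (Measure.measurable_rnDeriv _ _)
      (by exact ((Measure.measurable_rnDeriv _ _).mul (Measure.measurable_rnDeriv _ _)).pow_const _ :
        Measurable fun ω => (μ0.rnDeriv ρ ω * μ1.rnDeriv ρ ω) ^ (1/2 : ℝ)),
    Measure.withDensity_rnDeriv_eq _ _ hρ]
  rfl

lemma rnDeriv_prod_ae {α β : Type*} [MeasurableSpace α] [MeasurableSpace β]
    (μ1 lam1 : Measure α) (μ2 lam2 : Measure β)
    [IsFiniteMeasure μ1] [IsFiniteMeasure μ2] [SigmaFinite lam1] [SigmaFinite lam2]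
    (h1 : μ1 ≪ lam1) (h2 : μ2 ≪ lam2) :
    (μ1.prod μ2).rnDeriv (lam1.prod lam2)
      =ᵐ[lam1.prod lam2] fun p => μ1.rnDeriv lam1 p.1 * μ2.rnDeriv lam2 p.2 := by
  haveI : SigmaFinite (lam1.withDensity (μ1.rnDeriv lam1)) := by
    rw [Measure.withDensity_rnDeriv_eq _ _ h1]; infer_instance
  haveI : SigmaFinite (lam2.withDensity (μ2.rnDeriv lam2)) := by
    rw [Measure.withDensity_rnDeriv_eq _ _ h2]; infer_instance
  have key : μ1.prod μ2 = (lam1.prod lam2).withDensity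
      (fun p => μ1.rnDeriv lam1 p.1 * μ2.rnDeriv lam2 p.2) := by
    conv_lhs => rw [← Measure.withDensity_rnDeriv_eq _ _ h1,
      ← Measure.withDensity_rnDeriv_eq _ _ h2]
    exact withDensity_prod_aux _ _ (Measure.measurable_rnDeriv _ _)
      (Measure.measurable_rnDeriv _ _)
  rw [key]
  exact Measure.rnDeriv_withDensity _
    (((Measure.measurable_rnDeriv _ _).comp measurable_fst).mul
      ((Measure.measurable_rnDeriv _ _).comp measurable_snd))

theorem geomMean_prod {Ω1 Ω2 : Type*} [MeasurableSpace Ω1] [MeasurableSpace Ω2]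
    (ν1 η1 : Measure Ω1) (ν2 η2 : Measure Ω2)
    [IsFiniteMeasure ν1] [IsFiniteMeasure η1] [IsFiniteMeasure ν2] [IsFiniteMeasure η2] :
    geomMean (ν1.prod ν2) (η1.prod η2) = (geomMean ν1 η1).prod (geomMean ν2 η2) := by
  have hν1 : ν1 ≪ ν1 + η1 := Measure.absolutelyContinuous_of_le (Measure.le_add_right le_rfl)
  have hη1 : η1 ≪ ν1 + η1 := Measure.absolutelyContinuous_of_le (Measure.le_add_left le_rfl)
  have hν2 : ν2 ≪ ν2 + η2 := Measure.absolutelyContinuous_of_le (Measure.le_add_right le_rfl)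
  have hη2 : η2 ≪ ν2 + η2 := Measure.absolutelyContinuous_of_le (Measure.le_add_left le_rfl)
  have hν : ν1.prod ν2 ≪ (ν1 + η1).prod (ν2 + η2) := hν1.prod hν2
  have hη : η1.prod η2 ≪ (ν1 + η1).prod (ν2 + η2) := hη1.prod hη2
  rw [geomMean_eq_withDensity _ _ ((ν1 + η1).prod (ν2 + η2)) hν hη]
  have hcong : (fun p => ((ν1.prod ν2).rnDeriv ((ν1 + η1).prod (ν2 + η2)) p *
        (η1.prod η2).rnDeriv ((ν1 + η1).prod (ν2 + η2)) p) ^ (1/2 : ℝ))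
      =ᵐ[(ν1 + η1).prod (ν2 + η2)]
      (fun p : Ω1 × Ω2 =>
        (ν1.rnDeriv (ν1 + η1) p.1 * η1.rnDeriv (ν1 + η1) p.1) ^ (1/2 : ℝ) *
        (ν2.rnDeriv (ν2 + η2) p.2 * η2.rnDeriv (ν2 + η2) p.2) ^ (1/2 : ℝ)) := by
    filter_upwards [rnDeriv_prod_ae ν1 (ν1 + η1) ν2 (ν2 + η2) hν1 hν2,
      rnDeriv_prod_ae η1 (ν1 + η1) η2 (ν2 + η2) hη1 hη2] with p hp1 hp2
    rw [hp1, hp2, mul_mul_mul_comm,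
      ENNReal.mul_rpow_of_nonneg _ _ (by norm_num : (0:ℝ) ≤ 1/2)]
  rw [withDensity_congr_ae hcong]
  haveI : SigmaFinite ((ν1 + η1).withDensity
      (fun ω => (ν1.rnDeriv (ν1 + η1) ω * η1.rnDeriv (ν1 + η1) ω) ^ (1/2 : ℝ))) := by
    show SigmaFinite (geomMean ν1 η1); infer_instance
  haveI : SigmaFinite ((ν2 + η2).withDensity
      (fun ω => (ν2.rnDeriv (ν2 + η2) ω * η2.rnDeriv (ν2 + η2) ω) ^ (1/2 : ℝ))) := by
    show SigmaFinite (geomMean ν2 η2); infer_instance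
  rw [← withDensity_prod_aux _ _
    (by exact ((Measure.measurable_rnDeriv _ _).mul (Measure.measurable_rnDeriv _ _)).pow_const _ :
      Measurable fun ω => (ν1.rnDeriv (ν1 + η1) ω * η1.rnDeriv (ν1 + η1) ω) ^ (1/2 : ℝ))
    (by exact ((Measure.measurable_rnDeriv _ _).mul (Measure.measurable_rnDeriv _ _)).pow_const _ :
      Measurable fun ω => (ν2.rnDeriv (ν2 + η2) ω * η2.rnDeriv (ν2 + η2) ω) ^ (1/2 : ℝ))]
  rfl
end

section
/- Let σ > 0 and let μ̃ be the restriction of Lebesgue measure on ℝ to the interval [0,1], i.e. the measure with density 1_{[0,1]}. For y ∈ ℝ let Φ^y : ℝ → ℝ be the translation x ↦ x + y. Then for all y, z ∈ ℝ: He_σ(Φ^y_# μ̃, Φ^z_# μ̃)² = 2σ² min(|y − z|, 1). Consequently, every non-constant continuous curve in the translation family {Φ^y_# μ̃ : y ∈ ℝ} has infinite Hellinger length. -/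
open MeasureTheory ENNReal Real

variable {Ω : Type*} [MeasurableSpace Ω]

/-- Continuity of a curve of measures w.r.t. the Hellinger distance on `[0,1]`. -/
def HelContinuous (σ : ℝ) (γ : ℝ → Measure Ω) : Prop :=
  ∀ s ∈ Set.Icc (0:ℝ) 1,
    Filter.Tendsto (fun t => hellinger σ (γ t) (γ s)) (nhdsWithin s (Set.Icc 0 1)) (nhds 0)

/-- The Hellinger length of a curve: the supremum over all partitions
`0 = s₀ < s₁ < ⋯ < s_N = 1` of the sums of Hellinger distances. -/
noncomputable def helLength (σ : ℝ) (γ : ℝ → Measure Ω) : ℝ≥0∞ :=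
  ⨆ (N : ℕ) (s : Fin (N + 1) → ℝ) (_ : StrictMono s) (_ : s 0 = 0)
      (_ : s (Fin.last N) = 1),
    ∑ i : Fin N, ENNReal.ofReal (hellinger σ (γ (s i.castSucc)) (γ (s i.succ)))


section Aux
open NNReal Set Filter

lemma rnDeriv_div {C : Set ℝ} (hC : MeasurableSet C) {D : ℝ → ℝ≥0∞}
    (hD : Measurable D) (hD_top : ∀ x, D x ≠ ∞) (hCD : ∀ x ∈ C, D x ≠ 0) :
    (volume.restrict C).rnDeriv (volume.withDensity D)
      =ᵐ[volume.withDensity D] fun x => C.indicator 1 x / D x := by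
  have : SigmaFinite (volume.withDensity D) :=
    SigmaFinite.withDensity_of_ne_top (Filter.Eventually.of_forall hD_top)
  have hmeas : Measurable fun x => C.indicator 1 x / D x :=
    (measurable_one.indicator hC).div hD
  refine (Measure.eq_rnDeriv hmeas Measure.MutuallySingular.zero_left ?_).symm
  rw [zero_add, ← withDensity_mul _ hD hmeas]
  have : (D * fun x => C.indicator 1 x / D x) = C.indicator 1 := by
    funext x
    by_cases hx : x ∈ C
    · simp only [Pi.mul_apply, Set.indicator_of_mem hx, Pi.one_apply]
      exact ENNReal.mul_div_cancel (hCD x hx) (hD_top x)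
    · simp [Set.indicator_of_notMem hx]
  rw [this, withDensity_indicator_one hC]


lemma volE_le {y z : ℝ} (h : y ≤ z) :
    volume ((Icc y (1+y) \ Icc z (1+z)) ∪ (Icc z (1+z) \ Icc y (1+y)))
      = ENNReal.ofReal (2 * min (z - y) 1) := by
  rcases le_or_gt z (1 + y) with hz | hz
  · have h1 : Icc y (1+y) \ Icc z (1+z) = Ico y z := by
      ext x
      simp only [Set.mem_diff, Set.mem_Icc, Set.mem_Ico, not_and, not_le]
      constructor
      · rintro ⟨⟨h1, h2⟩, h3⟩
        refine ⟨h1, ?_⟩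
        by_contra hc
        push_neg at hc
        linarith [h3 hc]
      · rintro ⟨h1, h2⟩
        exact ⟨⟨h1, by linarith⟩, fun hc => by linarith⟩
    have h2 : Icc z (1+z) \ Icc y (1+y) = Ioc (1+y) (1+z) := by
      ext x
      simp only [Set.mem_diff, Set.mem_Icc, Set.mem_Ioc, not_and, not_le]
      constructor
      · rintro ⟨⟨h1, h2⟩, h3⟩
        refine ⟨?_, h2⟩
        by_contra hc
        push_neg at hc
        linarith [h3 (by linarith)]
      · rintro ⟨h1, h2⟩
        exact ⟨⟨by linarith, h2⟩, fun hc => by linarith⟩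
    rw [h1, h2, measure_union _ measurableSet_Ioc, Real.volume_Ico, Real.volume_Ioc,
      ← ENNReal.ofReal_add (by linarith) (by linarith), min_eq_left (by linarith)]
    · ring_nf
    · rw [Set.disjoint_left]
      rintro x ⟨_, hx2⟩ ⟨hx3, _⟩
      linarith
  · have hd : Disjoint (Icc y (1+y)) (Icc z (1+z)) := by
      rw [Set.disjoint_left]
      rintro x ⟨_, hx2⟩ ⟨hx3, _⟩
      linarith
    rw [hd.sdiff_eq_left, hd.symm.sdiff_eq_left, measure_union _ measurableSet_Icc,
      Real.volume_Icc, Real.volume_Icc, min_eq_right (by linarith)]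
    · rw [← ENNReal.ofReal_add (by norm_num) (by norm_num)]
      norm_num
    · rw [Set.disjoint_left]
      rintro x ⟨_, hx2⟩ ⟨hx3, _⟩
      linarith

lemma volE (y z : ℝ) :
    volume ((Icc y (1+y) \ Icc z (1+z)) ∪ (Icc z (1+z) \ Icc y (1+y)))
      = ENNReal.ofReal (2 * min |y - z| 1) := by
  rcases le_total y z with h | h
  · rw [volE_le h, abs_sub_comm, abs_of_nonneg (by linarith)]
  · rw [Set.union_comm, volE_le h, abs_of_nonneg (by linarith)]

lemma integral_formula (y z : ℝ) :
    (∫ ω, (Real.sqrt (((volume.restrict (Icc y (1+y))).rnDeriv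
          (volume.restrict (Icc y (1+y)) + volume.restrict (Icc z (1+z))) ω).toReal)
        - Real.sqrt (((volume.restrict (Icc z (1+z))).rnDeriv
          (volume.restrict (Icc y (1+y)) + volume.restrict (Icc z (1+z))) ω).toReal)) ^ 2
      ∂(volume.restrict (Icc y (1+y)) + volume.restrict (Icc z (1+z))))
    = (volume ((Icc y (1+y) \ Icc z (1+z)) ∪ (Icc z (1+z) \ Icc y (1+y)))).toReal := by
  set A := Icc y (1+y) with hA_def
  set B := Icc z (1+z) with hB_def
  have hA : MeasurableSet A := measurableSet_Icc
  have hB : MeasurableSet B := measurableSet_Icc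
  set Dn : ℝ → ℝ≥0 := fun x => A.indicator (1 : ℝ → ℝ≥0) x + B.indicator (1 : ℝ → ℝ≥0) x with hDn_def
  have hDn_meas : Measurable Dn :=
    (measurable_one.indicator hA).add (measurable_one.indicator hB)
  set D : ℝ → ℝ≥0∞ := fun x => (Dn x : ℝ≥0∞) with hD_def
  have hD_meas : Measurable D := hDn_meas.coe_nnreal_ennreal
  have hD_eq : ∀ x, D x = A.indicator 1 x + B.indicator 1 x := by
    intro x
    simp only [hD_def, hDn_def, ENNReal.coe_add]
    by_cases hx : x ∈ A <;> by_cases hx' : x ∈ B <;> simp [hx, hx']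
  have hD_top : ∀ x, D x ≠ ∞ := fun x => ENNReal.coe_ne_top
  have hsum : volume.restrict A + volume.restrict B = volume.withDensity D := by
    rw [show D = A.indicator 1 + B.indicator 1 from funext hD_eq,
      withDensity_add_left (measurable_one.indicator hA),
      withDensity_indicator_one hA, withDensity_indicator_one hB]
  have hDA : ∀ x ∈ A, D x ≠ 0 := by
    intro x hx
    rw [hD_eq x, Set.indicator_of_mem hx]
    simp
  have hDB : ∀ x ∈ B, D x ≠ 0 := by
    intro x hx
    rw [hD_eq x, Set.indicator_of_mem (s := B) hx]
    simp [add_comm]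
  rw [hsum]
  have e0 := rnDeriv_div hA hD_meas hD_top hDA
  have e1 := rnDeriv_div hB hD_meas hD_top hDB
  rw [integral_congr_ae (g := fun x =>
      (Real.sqrt ((A.indicator 1 x / D x).toReal)
        - Real.sqrt ((B.indicator 1 x / D x).toReal)) ^ 2)
    (by filter_upwards [e0, e1] with x h0 h1; rw [h0, h1])]
  rw [hD_def, integral_withDensity_eq_integral_smul hDn_meas]
  rw [show (fun x => Dn x • (Real.sqrt ((A.indicator 1 x / D x).toReal)
        - Real.sqrt ((B.indicator 1 x / D x).toReal)) ^ 2)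
      = ((A \ B) ∪ (B \ A)).indicator (1 : ℝ → ℝ) from ?_]
  · rw [integral_indicator_one ((hA.diff hB).union (hB.diff hA))]; rfl
  · funext x
    have hDx := hD_eq x
    by_cases hx : x ∈ A <;> by_cases hx' : x ∈ B
    · have : D x = 2 := by rw [hDx]; simp [hx, hx']; norm_num
      have hDn2 : Dn x = 2 := by
        have h2 := this; simp only [hD_def] at h2; exact_mod_cast h2
      simp only [Set.indicator_of_mem hx, Set.indicator_of_mem hx', this, hDn2]
      rw [Set.indicator_of_notMem (by simp [hx, hx'])]
      simp
    · have : D x = 1 := by rw [hDx]; simp [hx, hx']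
      have hDn1 : Dn x = 1 := by
        have h2 := this; simp only [hD_def] at h2; exact_mod_cast h2
      simp only [Set.indicator_of_mem hx, Set.indicator_of_notMem hx', this, hDn1]
      rw [Set.indicator_of_mem (by simp [hx, hx'])]
      simp
    · have : D x = 1 := by rw [hDx]; simp [hx, hx']
      have hDn1 : Dn x = 1 := by
        have h2 := this; simp only [hD_def] at h2; exact_mod_cast h2
      simp only [Set.indicator_of_notMem hx, Set.indicator_of_mem hx', this, hDn1]
      rw [Set.indicator_of_mem (by simp [hx, hx'])]
      simp
    · have hDn0 : Dn x = 0 := by simp [hDn_def, hx, hx']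
      simp [hDn0, Set.indicator_apply, hx, hx']

lemma tele (g : ℕ → ℝ) (i j n : ℕ) (hij : i ≤ j) (hjn : j ≤ n) :
    |g j - g i| ≤ ∑ k ∈ Finset.range n, |g (k+1) - g k| := by
  have h1 : ∑ k ∈ Finset.Ico i j, (g (k+1) - g k) = g j - g i := by
    rw [Finset.sum_Ico_eq_sum_range]
    have := Finset.sum_range_sub (fun k => g (i + k)) (j - i)
    calc ∑ k ∈ Finset.range (j - i), (g (i + k + 1) - g (i + k))
        = ∑ k ∈ Finset.range (j - i), (g (i + (k + 1)) - g (i + k)) := by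
          exact Finset.sum_congr rfl fun k _ => by rw [add_assoc]
      _ = g (i + (j - i)) - g (i + 0) := this
      _ = g j - g i := by rw [Nat.add_sub_cancel' hij, add_zero]
  calc |g j - g i| = |∑ k ∈ Finset.Ico i j, (g (k+1) - g k)| := by rw [h1]
    _ ≤ ∑ k ∈ Finset.Ico i j, |g (k+1) - g k| := Finset.abs_sum_le_sum_abs _ _
    _ ≤ ∑ k ∈ Finset.range n, |g (k+1) - g k| := by
        apply Finset.sum_le_sum_of_subset_of_nonneg
        · intro k hk
          simp only [Finset.mem_Ico] at hk
          simp only [Finset.mem_range]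
          omega
        · intro k _ _; positivity


lemma map_eq (y : ℝ) : (volume.restrict (Set.Icc (0:ℝ) 1)).map (fun x => x + y)
    = volume.restrict (Set.Icc y (1+y)) := by
  have he : MeasurableEmbedding (fun x : ℝ => x + y) :=
    (MeasurableEquiv.addRight y).measurableEmbedding
  have h2 : (fun x : ℝ => x + y) ⁻¹' Set.Icc y (1+y) = Set.Icc 0 1 := by
    ext x; simp
  rw [← h2, ← he.restrict_map, MeasureTheory.map_add_right_eq_self volume y]

lemma min_nonneg' (y z : ℝ) : 0 ≤ 2 * min |y - z| 1 := by positivity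

lemma hell_formula (σ : ℝ) (y z : ℝ) :
    hellinger σ ((volume.restrict (Set.Icc (0:ℝ) 1)).map (fun x => x + y))
      ((volume.restrict (Set.Icc (0:ℝ) 1)).map (fun x => x + z))
    = σ * Real.sqrt (2 * min |y - z| 1) := by
  rw [hellinger, map_eq, map_eq, integral_formula, volE,
    ENNReal.toReal_ofReal (min_nonneg' y z)]

lemma hell_sq (σ : ℝ) (y z : ℝ) :
    hellinger σ ((volume.restrict (Set.Icc (0:ℝ) 1)).map (fun x => x + y))
      ((volume.restrict (Set.Icc (0:ℝ) 1)).map (fun x => x + z)) ^ 2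
    = 2 * σ ^ 2 * min |y - z| 1 := by
  rw [hell_formula, mul_pow, Real.sq_sqrt (min_nonneg' y z)]
  ring

theorem part2 (σ : ℝ) (hσ : 0 < σ) (γ : ℝ → Measure ℝ) (hcont : HelContinuous σ γ)
    (hmem : ∀ s ∈ Set.Icc (0:ℝ) 1, γ s ∈ {μ | ∃ y : ℝ,
      μ = (volume.restrict (Set.Icc (0:ℝ) 1)).map (fun x => x + y)})
    (hnc : ∃ s ∈ Set.Icc (0:ℝ) 1, ∃ t ∈ Set.Icc (0:ℝ) 1, γ s ≠ γ t) :
    helLength σ γ = ⊤ := by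
  obtain ⟨s₀, hs₀, t₀, ht₀, hne⟩ := hnc
  classical
  set Y : ℝ → ℝ := fun s =>
    if h : ∃ v : ℝ, γ s = (volume.restrict (Set.Icc (0:ℝ) 1)).map (fun x => x + v) then
      h.choose else 0 with hY_def
  have hY : ∀ s ∈ Set.Icc (0:ℝ) 1,
      γ s = (volume.restrict (Set.Icc (0:ℝ) 1)).map (fun x => x + Y s) := by
    intro s hs
    have h : ∃ v : ℝ, γ s = (volume.restrict (Set.Icc (0:ℝ) 1)).map (fun x => x + v) :=
      hmem s hs
    have hYs : Y s = h.choose := by simp only [hY_def]; rw [dif_pos h]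
    rw [hYs]; exact h.choose_spec
  have hdist : ∀ s ∈ Set.Icc (0:ℝ) 1, ∀ t ∈ Set.Icc (0:ℝ) 1,
      hellinger σ (γ s) (γ t) = σ * Real.sqrt (2 * min |Y s - Y t| 1) := by
    intro s hs t ht
    rw [hY s hs, hY t ht, hell_formula]
  have hYcont : ContinuousOn Y (Set.Icc (0:ℝ) 1) := by
    intro s hs
    have h1 := hcont s hs
    have h2 : Filter.Tendsto (fun t => min |Y t - Y s| 1)
        (nhdsWithin s (Set.Icc 0 1)) (nhds 0) := by
      have hev : ∀ᶠ t in nhdsWithin s (Set.Icc 0 1),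
          (hellinger σ (γ t) (γ s) / σ) ^ 2 / 2 = min |Y t - Y s| 1 := by
        filter_upwards [self_mem_nhdsWithin] with t ht
        rw [hdist t ht s hs, mul_div_cancel_left₀ _ (ne_of_gt hσ),
          Real.sq_sqrt (by positivity)]
        ring
      have h3 : Filter.Tendsto (fun t => (hellinger σ (γ t) (γ s) / σ) ^ 2 / 2)
          (nhdsWithin s (Set.Icc 0 1)) (nhds (((0:ℝ) / σ) ^ 2 / 2)) :=
        ((h1.div_const σ).pow 2).div_const 2
      simp only [zero_div, ne_eq, OfNat.ofNat_ne_zero, not_false_eq_true, zero_pow] at h3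
      exact h3.congr' hev
    have h4 : ∀ᶠ t in nhdsWithin s (Set.Icc 0 1),
        min |Y t - Y s| 1 = |Y t - Y s| := by
      have hev2 : ∀ᶠ t in nhdsWithin s (Set.Icc 0 1), min |Y t - Y s| 1 < 1/2 :=
        h2.eventually_lt_const (by norm_num)
      filter_upwards [hev2] with t ht
      rcases le_total |Y t - Y s| 1 with h | h
      · rw [min_eq_left h]
      · rw [min_eq_right h] at ht; linarith
    have h5 : Filter.Tendsto (fun t => |Y t - Y s|)
        (nhdsWithin s (Set.Icc 0 1)) (nhds 0) := h2.congr' h4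
    have : Filter.Tendsto Y (nhdsWithin s (Set.Icc 0 1)) (nhds (Y s)) := by
      rw [tendsto_iff_dist_tendsto_zero]
      simpa [Real.dist_eq] using h5
    exact this
  set δ₀ : ℝ := |Y t₀ - Y s₀| with hδ₀_def
  have hδ₀ : 0 < δ₀ := by
    rw [hδ₀_def, abs_pos, sub_ne_zero]
    intro he
    exact hne (by rw [hY s₀ hs₀, hY t₀ ht₀, he])
  have hu := isCompact_Icc.uniformContinuousOn_of_continuous hYcont
  rw [Metric.uniformContinuousOn_iff] at hu
  refine ENNReal.eq_top_of_forall_nnreal_le fun r => ?_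
  set M : ℝ := max (r : ℝ) 1 with hM_def
  have hM : 0 < M := lt_of_lt_of_le one_pos (le_max_right _ _)
  set ε : ℝ := min (min (δ₀/4) 1) ((σ * δ₀ / (2 * M)) ^ 2) with hε_def
  have hε : 0 < ε := by
    apply lt_min (lt_min (by linarith) one_pos)
    positivity
  have hε1 : ε ≤ 1 := le_trans (min_le_left _ _) (min_le_right _ _)
  have hεδ : ε ≤ δ₀ / 4 := le_trans (min_le_left _ _) (min_le_left _ _)
  have hεM : ε ≤ (σ * δ₀ / (2 * M)) ^ 2 := min_le_right _ _
  obtain ⟨δ, hδ, hδu⟩ := hu ε hε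
  obtain ⟨n₀, hn₀⟩ := exists_nat_one_div_lt hδ
  obtain ⟨n, hn_pos, h1n⟩ : ∃ n : ℕ, 0 < n ∧ 1 / (n:ℝ) < δ :=
    ⟨n₀ + 1, Nat.succ_pos _, by push_cast; exact hn₀⟩
  have hnR : (0:ℝ) < n := by exact_mod_cast hn_pos
  have hgrid : ∀ k : ℕ, k ≤ n → ((k:ℝ)/n) ∈ Set.Icc (0:ℝ) 1 := by
    intro k hk
    constructor
    · positivity
    · rw [div_le_one hnR]; exact_mod_cast hk
  set g : ℕ → ℝ := fun k => Y ((k:ℝ)/n) with hg_def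
  have hstep : ∀ k : ℕ, k + 1 ≤ n → |g (k+1) - g k| < ε := by
    intro k hk
    have h1 : ((k:ℝ)/n) ∈ Set.Icc (0:ℝ) 1 := hgrid k (by omega)
    have h2 : (((k:ℕ):ℝ)+1)/n ∈ Set.Icc (0:ℝ) 1 := by
      have h2' := hgrid (k+1) hk
      rwa [Nat.cast_add, Nat.cast_one] at h2'
    have := hδu _ h2 _ h1 (by
      rw [Real.dist_eq]
      have he : ((k:ℝ)+1)/n - (k:ℝ)/n = 1/n := by field_simp; ring
      rw [he, abs_of_pos (by positivity)]
      exact h1n)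
    rw [Real.dist_eq] at this
    simpa [hg_def] using this
  have happrox : ∀ u : ℝ, u ∈ Set.Icc (0:ℝ) 1 →
      ⌊(n:ℝ) * u⌋₊ ≤ n ∧ |Y ((⌊(n:ℝ) * u⌋₊ : ℝ)/n) - Y u| < ε := by
    intro u hu'
    have h0 : (0:ℝ) ≤ (n:ℝ) * u := by
      have := hu'.1; positivity
    have hle : (⌊(n:ℝ) * u⌋₊ : ℝ) ≤ (n:ℝ) * u := Nat.floor_le h0
    have hlt : (n:ℝ) * u < ⌊(n:ℝ) * u⌋₊ + 1 := Nat.lt_floor_add_one _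
    have hmn : ⌊(n:ℝ) * u⌋₊ ≤ n := by
      have h2 : (⌊(n:ℝ) * u⌋₊ : ℝ) ≤ (n:ℝ) := by
        calc (⌊(n:ℝ) * u⌋₊ : ℝ) ≤ (n:ℝ) * u := hle
          _ ≤ (n:ℝ) * 1 := by nlinarith [hu'.2]
          _ = (n:ℝ) := mul_one _
      exact_mod_cast h2
    refine ⟨hmn, ?_⟩
    have hmem1 : ((⌊(n:ℝ) * u⌋₊ : ℝ)/n) ∈ Set.Icc (0:ℝ) 1 := hgrid _ hmn
    have hdistlt : dist ((⌊(n:ℝ) * u⌋₊ : ℝ)/n) u < δ := by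
      rw [Real.dist_eq, abs_of_nonpos (by rw [sub_nonpos, div_le_iff₀ hnR]; linarith)]
      have heq : -((⌊(n:ℝ) * u⌋₊ : ℝ)/n - u) = ((n:ℝ) * u - (⌊(n:ℝ) * u⌋₊:ℝ))/n := by
        field_simp; ring
      rw [heq]
      calc ((n:ℝ) * u - (⌊(n:ℝ) * u⌋₊:ℝ))/n < 1/n :=
            (div_lt_div_iff_of_pos_right hnR).mpr (by linarith)
          _ < δ := h1n
    have := hδu _ hmem1 _ hu' hdistlt
    rw [Real.dist_eq] at this
    exact this
  obtain ⟨hpn, hp⟩ := happrox s₀ hs₀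
  obtain ⟨hqn, hq⟩ := happrox t₀ ht₀
  set p : ℕ := ⌊(n:ℝ) * s₀⌋₊
  set q : ℕ := ⌊(n:ℝ) * t₀⌋₊
  -- sum of increments is at least δ₀/2
  have hSig : δ₀ / 2 ≤ ∑ k ∈ Finset.range n, |g (k+1) - g k| := by
    have htel := tele g (min p q) (max p q) n min_le_max (max_le hpn hqn)
    have habs : |g (max p q) - g (min p q)| = |g q - g p| := by
      rcases le_total p q with h | h
      · rw [max_eq_right h, min_eq_left h]
      · rw [max_eq_left h, min_eq_right h, abs_sub_comm]
    have htri : δ₀ ≤ |g q - g p| + ε + ε := by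
      have t1 : |Y t₀ - Y s₀| ≤ |Y t₀ - g q| + |g q - Y s₀| := abs_sub_le _ _ _
      have t2 : |g q - Y s₀| ≤ |g q - g p| + |g p - Y s₀| := abs_sub_le _ _ _
      have t3 : |Y t₀ - g q| < ε := by rw [abs_sub_comm]; exact hq
      have t4 : |g p - Y s₀| < ε := hp
      rw [hδ₀_def]
      linarith
    have : δ₀ / 2 ≤ |g q - g p| := by linarith
    linarith [htel, habs.symm ▸ htel]
  -- lower bound each hellinger term
  have hterm : ∀ k ∈ Finset.range n,
      σ / Real.sqrt ε * |g (k+1) - g k| ≤ σ * Real.sqrt (2 * min |g (k+1) - g k| 1) := by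
    intro k hk
    rw [Finset.mem_range] at hk
    set x : ℝ := |g (k+1) - g k| with hx_def
    have hx0 : 0 ≤ x := abs_nonneg _
    have hxε : x < ε := hstep k hk
    have hmin : min x 1 = x := min_eq_left (by linarith)
    rw [hmin]
    have hsε : 0 < Real.sqrt ε := Real.sqrt_pos.mpr hε
    have h1 : x / Real.sqrt ε ≤ Real.sqrt x := by
      rw [div_le_iff₀ hsε]
      calc x = Real.sqrt x * Real.sqrt x := (Real.mul_self_sqrt hx0).symm
        _ ≤ Real.sqrt x * Real.sqrt ε := by
            apply mul_le_mul_of_nonneg_left (Real.sqrt_le_sqrt (le_of_lt hxε))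
              (Real.sqrt_nonneg _)
    have h2 : Real.sqrt x ≤ Real.sqrt (2 * x) := Real.sqrt_le_sqrt (by linarith)
    calc σ / Real.sqrt ε * x = σ * (x / Real.sqrt ε) := by ring
      _ ≤ σ * Real.sqrt x := mul_le_mul_of_nonneg_left h1 (le_of_lt hσ)
      _ ≤ σ * Real.sqrt (2 * x) := mul_le_mul_of_nonneg_left h2 (le_of_lt hσ)
  have hS : M ≤ ∑ k ∈ Finset.range n, σ * Real.sqrt (2 * min |g (k+1) - g k| 1) := by
    have hsum1 : σ / Real.sqrt ε * (δ₀ / 2)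
        ≤ ∑ k ∈ Finset.range n, σ * Real.sqrt (2 * min |g (k+1) - g k| 1) := by
      calc σ / Real.sqrt ε * (δ₀ / 2)
          ≤ σ / Real.sqrt ε * ∑ k ∈ Finset.range n, |g (k+1) - g k| := by
            apply mul_le_mul_of_nonneg_left hSig (by positivity)
        _ = ∑ k ∈ Finset.range n, σ / Real.sqrt ε * |g (k+1) - g k| := by
            rw [Finset.mul_sum]
        _ ≤ _ := Finset.sum_le_sum hterm
    have hsqε : Real.sqrt ε ≤ σ * δ₀ / (2 * M) := by
      have := Real.sqrt_le_sqrt hεM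
      rwa [Real.sqrt_sq (by positivity)] at this
    have hM2 : M ≤ σ / Real.sqrt ε * (δ₀ / 2) := by
      rw [show σ / Real.sqrt ε * (δ₀ / 2) = (σ * δ₀ / 2) / Real.sqrt ε by ring,
        le_div_iff₀ (Real.sqrt_pos.mpr hε)]
      calc M * Real.sqrt ε ≤ M * (σ * δ₀ / (2 * M)) := by
            apply mul_le_mul_of_nonneg_left hsqε (le_of_lt hM)
        _ = σ * δ₀ / 2 := by field_simp
    linarith
  -- build the partition
  set sf : Fin (n + 1) → ℝ := fun k => ((k : ℕ) : ℝ) / n with hsf_def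
  have hmono : StrictMono sf := by
    intro a b hab
    apply (div_lt_div_iff_of_pos_right hnR).mpr
    exact_mod_cast hab
  have h0' : sf 0 = 0 := by simp [hsf_def]
  have hlast : sf (Fin.last n) = 1 := by
    simp only [hsf_def, Fin.val_last]
    exact div_self (ne_of_gt hnR)
  have hsum_eq : ∑ i : Fin n, ENNReal.ofReal (hellinger σ (γ (sf i.castSucc)) (γ (sf i.succ)))
      = ∑ k ∈ Finset.range n,
          ENNReal.ofReal (hellinger σ (γ (((k:ℕ):ℝ)/n)) (γ ((((k:ℕ):ℝ)+1)/n))) := by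
    rw [← Fin.sum_univ_eq_sum_range
      (fun k => ENNReal.ofReal (hellinger σ (γ (((k:ℕ):ℝ)/n)) (γ ((((k:ℕ):ℝ)+1)/n)))) n]
    refine Finset.sum_congr rfl fun i _ => ?_
    have e1 : sf i.castSucc = ((i : ℕ) : ℝ)/n := by simp [hsf_def]
    have e2 : sf i.succ = (((i : ℕ) : ℝ)+1)/n := by
      simp only [hsf_def, Fin.val_succ]
      rw [Nat.cast_add, Nat.cast_one]
    rw [e1, e2]
  have hhell_eq : ∀ k ∈ Finset.range n,
      hellinger σ (γ (((k:ℕ):ℝ)/n)) (γ ((((k:ℕ):ℝ)+1)/n))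
        = σ * Real.sqrt (2 * min |g (k+1) - g k| 1) := by
    intro k hk
    rw [Finset.mem_range] at hk
    have h1 : ((k:ℝ)/n) ∈ Set.Icc (0:ℝ) 1 := hgrid k (by omega)
    have h2 : (((k:ℝ))+1)/n ∈ Set.Icc (0:ℝ) 1 := by
      have h2' := hgrid (k+1) hk
      rwa [Nat.cast_add, Nat.cast_one] at h2'
    rw [hdist _ h1 _ h2]
    congr 2
    have hgk : g (k+1) = Y ((((k:ℝ))+1)/n) := by
      simp only [hg_def]
      rw [Nat.cast_add, Nat.cast_one]
    rw [abs_sub_comm, hgk]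
  -- conclude
  calc (r : ℝ≥0∞) = ENNReal.ofReal (r : ℝ) := ENNReal.ofReal_coe_nnreal.symm
    _ ≤ ENNReal.ofReal (∑ k ∈ Finset.range n,
          σ * Real.sqrt (2 * min |g (k+1) - g k| 1)) := by
        apply ENNReal.ofReal_le_ofReal
        calc (r:ℝ) ≤ M := le_max_left _ _
          _ ≤ _ := hS
    _ = ∑ k ∈ Finset.range n,
          ENNReal.ofReal (σ * Real.sqrt (2 * min |g (k+1) - g k| 1)) := by
        apply ENNReal.ofReal_sum_of_nonneg
        intro i _
        positivity
    _ = ∑ i : Fin n, ENNReal.ofReal (hellinger σ (γ (sf i.castSucc)) (γ (sf i.succ))) := by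
        rw [hsum_eq]
        exact (Finset.sum_congr rfl fun k hk => by rw [hhell_eq k hk]).symm
    _ ≤ helLength σ γ := by
        rw [helLength]
        exact le_iSup_of_le n (le_iSup_of_le sf (le_iSup_of_le hmono
          (le_iSup_of_le h0' (le_iSup_of_le hlast le_rfl))))

end Aux

theorem hellinger_translated_uniform (σ : ℝ) (hσ : 0 < σ) :
    letI μt : Measure ℝ := volume.restrict (Set.Icc (0:ℝ) 1)
    (∀ y z : ℝ,
        hellinger σ (μt.map (fun x => x + y)) (μt.map (fun x => x + z)) ^ 2 =
          2 * σ ^ 2 * min |y - z| 1) ∧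
      ∀ γ : ℝ → Measure ℝ, HelContinuous σ γ →
        (∀ s ∈ Set.Icc (0:ℝ) 1, γ s ∈ {μ | ∃ y : ℝ, μ = μt.map (fun x => x + y)}) →
        (∃ s ∈ Set.Icc (0:ℝ) 1, ∃ t ∈ Set.Icc (0:ℝ) 1, γ s ≠ γ t) →
        helLength σ γ = ⊤ := by
  exact ⟨fun y z => hell_sq σ y z, fun γ hcont hmem hnc => part2 σ hσ γ hcont hmem hnc⟩
end
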